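/- Let p and q be coprime integers with p > q ≥ 2 and let r, s be integers with r·p + s·q = 1, |r| < q, and 1 < s < p. Then: (i) for every natural number n, the normal closure of μ_n in G is all of G; and (ii) for all natural numbers m ≠ n, μ_m and μ_n are not conjugate in G. In particular, the (p,q)-torus knot group contains infinitely many pairwise nonconjugate elements each of which normally generates the group. -/

import Mathlib

set_option linter.unusedSectionVars false

namespace TKN

variable {α β : Type*} [AddCommGroup α] [DecidableEq α] [AddCommGroup β] [DecidableEq β]

/-- a letter is ok if its component is nonzero -/
def ok : α ⊕ β → Prop := Sum.elim (· ≠ 0) (· ≠ 0)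

/-- adjacent letters must come from different sides -/
def alt (x y : α ⊕ β) : Prop := x.isLeft ≠ y.isLeft

/-- reduced words -/
def Red (l : List (α ⊕ β)) : Prop := (∀ x ∈ l, ok x) ∧ l.Chain' alt

/-- the set of reduced words -/
abbrev W (α β : Type*) [AddCommGroup α] [AddCommGroup β] := {l : List (α ⊕ β) // Red l}

theorem red_nil : Red ([] : List (α ⊕ β)) := ⟨by simp, List.isChain_nil⟩

/-- action of the left factor on words -/
def actA (k : α) : List (α ⊕ β) → List (α ⊕ β)
  | [] => if k = 0 then [] else [Sum.inl k]
  | (Sum.inl a) :: t => if k + a = 0 then t else Sum.inl (k + a) :: t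
  | (Sum.inr b) :: t => if k = 0 then Sum.inr b :: t else Sum.inl k :: Sum.inr b :: t

theorem red_tail {x : α ⊕ β} {t : List (α ⊕ β)} (h : Red (x :: t)) : Red t :=
  ⟨fun y hy => h.1 y (List.mem_cons_of_mem _ hy), h.2.tail⟩

theorem red_cons {x : α ⊕ β} {t : List (α ⊕ β)} (hx : ok x) (ht : Red t)
    (h : ∀ y ∈ t.head?, alt x y) : Red (x :: t) := by
  refine ⟨?_, List.isChain_cons.2 ⟨h, ht.2⟩⟩
  intro y hy
  rcases List.mem_cons.1 hy with rfl | hy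
  · exact hx
  · exact ht.1 y hy

theorem actA_red {k : α} {l : List (α ⊕ β)} (h : Red l) : Red (actA k l) := by
  match l with
  | [] =>
    by_cases hk : k = 0 <;> simp [actA, hk, Red, ok, alt, List.Chain']
  | (Sum.inl a) :: t =>
    by_cases hz : k + a = 0
    · simpa [actA, hz] using red_tail h
    · simp only [actA, hz, if_neg, if_false]
      refine red_cons hz (red_tail h) ?_
      intro y hy
      have := h.2
      cases t with
      | nil => simp at hy
      | cons y' t' =>
        simp only [List.head?_cons, Option.mem_some_iff] at hy
        subst hy
        simpa [alt] using (List.isChain_cons_cons.1 this).1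
  | (Sum.inr b) :: t =>
    by_cases hk : k = 0
    · simpa [actA, hk] using h
    · simp only [actA, hk, if_neg, if_false]
      exact red_cons hk h (by simp [alt])

theorem actA_zero {l : List (α ⊕ β)} (h : Red l) : actA (0 : α) l = l := by
  match l with
  | [] => simp [actA]
  | (Sum.inl a) :: t =>
    have ha : a ≠ 0 := h.1 (Sum.inl a) (by simp)
    simp [actA, ha]
  | (Sum.inr b) :: t => simp [actA]

theorem actA_add (k m : α) {l : List (α ⊕ β)} (h : Red l) :
    actA (k + m) l = actA k (actA m l) := by
  match l with
  | [] =>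
    by_cases hm : m = 0
    · subst hm; rw [add_zero, actA_zero red_nil]
    · by_cases hk : k + m = 0 <;> simp [actA, hm, hk]
  | (Sum.inl a) :: t =>
    by_cases hz : m + a = 0
    · by_cases hk : k = 0
      · subst hk
        rw [zero_add, actA_zero (actA_red h)]
      · have h1 : k + m + a = k := by rw [add_assoc, hz, add_zero]
        simp only [actA, hz, if_pos, h1, if_neg hk]
        match t, h with
        | [], _ => simp [actA, hk]
        | (Sum.inr b) :: t', _ => simp [actA, hk]
        | (Sum.inl a') :: t', h => exact absurd (h.2.rel_head) (by simp [alt])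
    · have h1 : k + m + a = k + (m + a) := by rw [add_assoc]
      by_cases hz2 : k + (m + a) = 0
      · simp [actA, hz, h1, hz2]
      · simp [actA, hz, h1, hz2]
  | (Sum.inr b) :: t =>
    by_cases hm : m = 0
    · subst hm; rw [add_zero, actA_zero h]
    · by_cases hk : k + m = 0 <;> simp [actA, hm, hk]

/-- action of the right factor on words -/
def actB (k : β) : List (α ⊕ β) → List (α ⊕ β)
  | [] => if k = 0 then [] else [Sum.inr k]
  | (Sum.inr b) :: t => if k + b = 0 then t else Sum.inr (k + b) :: t
  | (Sum.inl a) :: t => if k = 0 then Sum.inl a :: t else Sum.inr k :: Sum.inl a :: t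

theorem actB_red {k : β} {l : List (α ⊕ β)} (h : Red l) : Red (actB k l) := by
  match l with
  | [] =>
    by_cases hk : k = 0 <;> simp [actB, hk, Red, ok, alt, List.Chain']
  | (Sum.inr b) :: t =>
    by_cases hz : k + b = 0
    · simpa [actB, hz] using red_tail h
    · simp only [actB, hz, if_neg, if_false]
      refine red_cons hz (red_tail h) ?_
      intro y hy
      have := h.2
      cases t with
      | nil => simp at hy
      | cons y' t' =>
        simp only [List.head?_cons, Option.mem_some_iff] at hy
        subst hy
        simpa [alt] using (List.isChain_cons_cons.1 this).1
  | (Sum.inl a) :: t =>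
    by_cases hk : k = 0
    · simpa [actB, hk] using h
    · simp only [actB, hk, if_neg, if_false]
      exact red_cons hk h (by simp [alt])

theorem actB_zero {l : List (α ⊕ β)} (h : Red l) : actB (0 : β) l = l := by
  match l with
  | [] => simp [actB]
  | (Sum.inr b) :: t =>
    have hb : b ≠ 0 := h.1 (Sum.inr b) (by simp)
    simp [actB, hb]
  | (Sum.inl a) :: t => simp [actB]

theorem actB_add (k m : β) {l : List (α ⊕ β)} (h : Red l) :
    actB (k + m) l = actB k (actB m l) := by
  match l with
  | [] =>
    by_cases hm : m = 0
    · subst hm; rw [add_zero, actB_zero red_nil]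
    · by_cases hk : k + m = 0 <;> simp [actB, hm, hk]
  | (Sum.inr b) :: t =>
    by_cases hz : m + b = 0
    · by_cases hk : k = 0
      · subst hk
        rw [zero_add, actB_zero (actB_red h)]
      · have h1 : k + m + b = k := by rw [add_assoc, hz, add_zero]
        simp only [actB, hz, if_pos, h1, if_neg hk]
        match t, h with
        | [], _ => simp [actB, hk]
        | (Sum.inl a) :: t', _ => simp [actB, hk]
        | (Sum.inr b') :: t', h => exact absurd (h.2.rel_head) (by simp [alt])
    · have h1 : k + m + b = k + (m + b) := by rw [add_assoc]
      by_cases hz2 : k + (m + b) = 0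
      · simp [actB, hz, h1, hz2]
      · simp [actB, hz, h1, hz2]
  | (Sum.inl a) :: t =>
    by_cases hm : m = 0
    · subst hm; rw [add_zero, actB_zero h]
    · by_cases hk : k + m = 0 <;> simp [actB, hm, hk]

/-- the permutation of reduced words induced by adding `k` on the left factor -/
def permA (k : α) : Equiv.Perm (W α β) where
  toFun w := ⟨actA k w.1, actA_red w.2⟩
  invFun w := ⟨actA (-k) w.1, actA_red w.2⟩
  left_inv w := by
    apply Subtype.ext
    show actA (-k) (actA k w.1) = w.1
    rw [← actA_add _ _ w.2, neg_add_cancel, actA_zero w.2]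
  right_inv w := by
    apply Subtype.ext
    show actA k (actA (-k) w.1) = w.1
    rw [← actA_add _ _ w.2, add_neg_cancel, actA_zero w.2]

/-- the permutation of reduced words induced by adding `k` on the right factor -/
def permB (k : β) : Equiv.Perm (W α β) where
  toFun w := ⟨actB k w.1, actB_red w.2⟩
  invFun w := ⟨actB (-k) w.1, actB_red w.2⟩
  left_inv w := by
    apply Subtype.ext
    show actB (-k) (actB k w.1) = w.1
    rw [← actB_add _ _ w.2, neg_add_cancel, actB_zero w.2]
  right_inv w := by
    apply Subtype.ext
    show actB k (actB (-k) w.1) = w.1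
    rw [← actB_add _ _ w.2, add_neg_cancel, actB_zero w.2]

theorem permA_apply (k : α) (w : W α β) : ((permA k w : W α β) : List (α ⊕ β)) = actA k w.1 := rfl

theorem permB_apply (k : β) (w : W α β) : ((permB k w : W α β) : List (α ⊕ β)) = actB k w.1 := rfl

theorem permA_mul (k m : α) : (permA k * permA m : Equiv.Perm (W α β)) = permA (k + m) := by
  refine Equiv.ext fun w => Subtype.ext ?_
  show actA k (actA m w.1) = actA (k+m) w.1
  rw [actA_add _ _ w.2]

theorem permB_mul (k m : β) : (permB k * permB m : Equiv.Perm (W α β)) = permB (k + m) := by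
  refine Equiv.ext fun w => Subtype.ext ?_
  show actB k (actB m w.1) = actB (k+m) w.1
  rw [actB_add _ _ w.2]

theorem permA_zero : (permA 0 : Equiv.Perm (W α β)) = 1 := by
  refine Equiv.ext fun w => Subtype.ext ?_
  show actA 0 w.1 = w.1
  exact actA_zero w.2

theorem permB_zero : (permB 0 : Equiv.Perm (W α β)) = 1 := by
  refine Equiv.ext fun w => Subtype.ext ?_
  show actB 0 w.1 = w.1
  exact actB_zero w.2

/-- `permA` as a monoid hom from `Multiplicative α`. -/
def permAHom : Multiplicative α →* Equiv.Perm (W α β) :=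
  MonoidHom.mk' (fun k => permA (Multiplicative.toAdd k)) (fun a b => by
    show permA _ = _ * _
    rw [permA_mul]
    rfl)

/-- `permB` as a monoid hom from `Multiplicative β`. -/
def permBHom : Multiplicative β →* Equiv.Perm (W α β) :=
  MonoidHom.mk' (fun k => permB (Multiplicative.toAdd k)) (fun a b => by
    show permB _ = _ * _
    rw [permB_mul]
    rfl)

theorem permA_zpow (k : α) (z : ℤ) : (permA k : Equiv.Perm (W α β)) ^ z = permA (z • k) := by
  have : (permA k : Equiv.Perm (W α β)) = permAHom (Multiplicative.ofAdd k) := rfl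
  rw [this, ← map_zpow, ← ofAdd_zsmul]
  rfl

theorem permB_zpow (k : β) (z : ℤ) : (permB k : Equiv.Perm (W α β)) ^ z = permB (z • k) := by
  have : (permB k : Equiv.Perm (W α β)) = permBHom (Multiplicative.ofAdd k) := rfl
  rw [this, ← map_zpow, ← ofAdd_zsmul]
  rfl

theorem permA_inv (k : α) : (permA k : Equiv.Perm (W α β))⁻¹ = permA (-k) := by
  rw [← zpow_neg_one, permA_zpow]; norm_num

/-- the empty reduced word -/
def wnil : W α β := ⟨[], red_nil⟩

/-- the head of the word is not a left-factor letter -/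
def HeadR (w : W α β) : Prop := ∀ a : α, w.1.head? ≠ some (Sum.inl a)

theorem prependA {k : α} (hk : k ≠ 0) {w : W α β} (hw : HeadR w) :
    ((permA k w : W α β) : List (α ⊕ β)) = Sum.inl k :: w.1 := by
  rcases w with ⟨l, hl⟩
  rw [permA_apply]
  match l, hl, hw with
  | [], _, _ => simp [actA, hk]
  | (Sum.inl a) :: t, _, hw => exact absurd rfl (hw a)
  | (Sum.inr b) :: t, _, _ => simp [actA, hk]

theorem prependB {k : β} (hk : k ≠ 0) {w : W α β} {a : α}
    (hw : w.1.head? = some (Sum.inl a)) :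
    ((permB k w : W α β) : List (α ⊕ β)) = Sum.inr k :: w.1 := by
  rcases w with ⟨l, hl⟩
  rw [permB_apply]
  match l, hl, hw with
  | (Sum.inl a') :: t, _, _ => simp [actB, hk]

theorem mergeA {k a : α} {w : W α β} (hw : w.1.head? = some (Sum.inl a))
    (hk : k + a ≠ 0) :
    ((permA k w : W α β) : List (α ⊕ β)) = Sum.inl (k + a) :: w.1.tail := by
  rcases w with ⟨l, hl⟩
  rw [permA_apply]
  match l, hl, hw with
  | (Sum.inl a') :: t, _, hw =>
    simp only [List.head?_cons, Option.some_inj, Sum.inl.injEq] at hw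
    subst hw
    simp [actA, hk]

section Computation

variable (sa e : α) (rb : β) (qn : ℕ)

/-- the basic two-letter block -/
def XP : Equiv.Perm (W α β) := permA sa * permB rb

/-- the repeating `2 qn`-letter block of `μ_n` -/
def FP : Equiv.Perm (W α β) := XP sa rb ^ qn * permA e

/-- the permutation corresponding to the conjugate `v^r (x^q u⁻¹)^n u^s` of `μ_n` -/
def CP (n : ℕ) : Equiv.Perm (W α β) := permB rb * FP sa e rb qn ^ n * permA sa

variable {sa e rb}

theorem XP_apply (w : W α β) (hsa : sa ≠ 0) (hrb : rb ≠ 0) {a : α}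
    (hw : w.1.head? = some (Sum.inl a)) :
    (XP sa rb w).1 = Sum.inl sa :: Sum.inr rb :: w.1 := by
  have h1 : ((permB rb) w).1 = Sum.inr rb :: w.1 := prependB hrb hw
  have h2 : (XP sa rb w).1 = ((permA sa) ((permB rb) w)).1 := rfl
  rw [h2, prependA hsa (w := (permB rb) w) ?_, h1]
  intro a' h
  rw [h1] at h
  simp at h

theorem growA (hsa : sa ≠ 0) (hrb : rb ≠ 0) (j : ℕ) :
    ∀ w : W α β, (∃ a : α, w.1.head? = some (Sum.inl a)) →
      (((XP sa rb ^ (j+1)) w).1.length = w.1.length + 2*(j+1) ∧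
        ((XP sa rb ^ (j+1)) w).1.head? = some (Sum.inl sa)) := by
  induction j with
  | zero =>
    intro w ⟨a, ha⟩
    rw [pow_one]
    rw [XP_apply w hsa hrb ha]
    simp
  | succ j ih =>
    intro w hw
    have key : ((XP sa rb ^ (j+1+1)) w) = XP sa rb ((XP sa rb ^ (j+1)) w) := by
      rw [pow_succ']; rfl
    obtain ⟨hlen, hhead⟩ := ih w hw
    rw [key, XP_apply _ hsa hrb hhead]
    constructor
    · simp only [List.length_cons]
      omega
    · simp

theorem blockF (hsa : sa ≠ 0) (hrb : rb ≠ 0) (hesa : e + sa ≠ 0) (hqn : 1 ≤ qn)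
    (w : W α β) (hw : w.1.head? = some (Sum.inl sa)) :
    ((FP sa e rb qn w).1.length = w.1.length + 2*qn ∧
      (FP sa e rb qn w).1.head? = some (Sum.inl sa)) := by
  have h1 : ((permA e) w).1 = Sum.inl (e + sa) :: w.1.tail := mergeA hw hesa
  have hlen1 : ((permA e) w).1.length = w.1.length := by
    rcases w with ⟨l, hl⟩
    match l, hl, hw with
    | (Sum.inl a') :: t, _, hw => rw [h1]; simp
  have hhead1 : ((permA e) w).1.head? = some (Sum.inl (e + sa)) := by rw [h1]; simp
  obtain ⟨j, rfl⟩ : ∃ j, qn = j + 1 := ⟨qn - 1, by omega⟩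
  have hgrow := growA hsa hrb j ((permA e) w) ⟨e + sa, hhead1⟩
  have key : FP sa e rb (j+1) w = (XP sa rb ^ (j+1)) ((permA e) w) := rfl
  rw [key, hgrow.1, hlen1]
  exact ⟨rfl, hgrow.2⟩

theorem blockFpow (hsa : sa ≠ 0) (hrb : rb ≠ 0) (hesa : e + sa ≠ 0) (hqn : 1 ≤ qn) (n : ℕ)
    (w : W α β) (hw : w.1.head? = some (Sum.inl sa)) :
    (((FP sa e rb qn ^ n) w).1.length = w.1.length + 2*qn*n ∧
      ((FP sa e rb qn ^ n) w).1.head? = some (Sum.inl sa)) := by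
  induction n with
  | zero => simpa using hw
  | succ n ih =>
    have key : ((FP sa e rb qn ^ (n+1)) w) = FP sa e rb qn ((FP sa e rb qn ^ n) w) := by
      rw [pow_succ']; rfl
    rw [key]
    obtain ⟨h1, h2⟩ := blockF qn hsa hrb hesa hqn _ ih.2
    exact ⟨by rw [h1, ih.1]; ring, h2⟩

theorem Capply (hsa : sa ≠ 0) (hrb : rb ≠ 0) (hesa : e + sa ≠ 0) (hqn : 1 ≤ qn) (n : ℕ)
    (w : W α β) (hw : HeadR w) :
    ((CP sa e rb qn n w).1.length = w.1.length + (2*qn*n + 2) ∧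
      HeadR (CP sa e rb qn n w)) := by
  have key : CP sa e rb qn n w = (permB rb) ((FP sa e rb qn ^ n) ((permA sa) w)) := rfl
  have h1 : ((permA sa) w).1 = Sum.inl sa :: w.1 := prependA hsa hw
  have hh1 : ((permA sa) w).1.head? = some (Sum.inl sa) := by rw [h1]; simp
  obtain ⟨h2, h3⟩ := blockFpow qn hsa hrb hesa hqn n _ hh1
  set w' := (FP sa e rb qn ^ n) ((permA sa) w) with hw'
  have h4 : ((permB rb) w').1 = Sum.inr rb :: w'.1 := prependB hrb h3
  constructor
  · rw [key]
    show ((permB rb) w').1.length = _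
    rw [h4]
    simp only [List.length_cons]
    rw [h2, h1]
    simp only [List.length_cons]
    ring
  · rw [key]
    intro a' hcon
    rw [show ((permB rb) w').1.head? = some (Sum.inr rb) by rw [h4]; simp] at hcon
    simp at hcon

theorem Cpow (hsa : sa ≠ 0) (hrb : rb ≠ 0) (hesa : e + sa ≠ 0) (hqn : 1 ≤ qn) (n k : ℕ) :
    ((CP sa e rb qn n ^ k) wnil).1.length = k * (2*qn*n + 2) ∧
      HeadR ((CP sa e rb qn n ^ k) wnil) := by
  induction k with
  | zero =>
    refine ⟨by simp [wnil], ?_⟩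
    intro a h
    simp [wnil] at h
  | succ k ih =>
    have key : ((CP sa e rb qn n ^ (k+1)) wnil) =
        CP sa e rb qn n ((CP sa e rb qn n ^ k) wnil) := by
      rw [pow_succ']; rfl
    rw [key]
    obtain ⟨h1, h2⟩ := Capply qn hsa hrb hesa hqn n _ ih.2
    exact ⟨by rw [h1, ih.1]; ring, h2⟩

end Computation
section Bounds

/-- upper length bound for the action of a permutation -/
def Bnd (π : Equiv.Perm (W α β)) (b : ℕ) : Prop := ∀ w : W α β, (π w).1.length ≤ w.1.length + b

theorem bnd_permA (k : α) : Bnd (permA k : Equiv.Perm (W α β)) 1 := by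
  intro w
  rcases w with ⟨l, hl⟩
  rw [permA_apply]
  match l with
  | [] => by_cases hk : k = 0 <;> simp [actA, hk]
  | (Sum.inl a) :: t => by_cases hz : k + a = 0 <;> simp [actA, hz] <;> omega
  | (Sum.inr b) :: t => by_cases hk : k = 0 <;> simp [actA, hk]

theorem bnd_permB (k : β) : Bnd (permB k : Equiv.Perm (W α β)) 1 := by
  intro w
  rcases w with ⟨l, hl⟩
  rw [permB_apply]
  match l with
  | [] => by_cases hk : k = 0 <;> simp [actB, hk]
  | (Sum.inr b) :: t => by_cases hz : k + b = 0 <;> simp [actB, hz] <;> omega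
  | (Sum.inl a) :: t => by_cases hk : k = 0 <;> simp [actB, hk]

theorem bnd_mul {π ρ : Equiv.Perm (W α β)} {b c : ℕ} (hπ : Bnd π b) (hρ : Bnd ρ c) :
    Bnd (π * ρ) (c + b) := by
  intro w
  calc ((π * ρ) w).1.length = (π (ρ w)).1.length := rfl
    _ ≤ (ρ w).1.length + b := hπ _
    _ ≤ w.1.length + c + b := by have := hρ w; omega
    _ = w.1.length + (c + b) := by ring

theorem bnd_pow {π : Equiv.Perm (W α β)} {b : ℕ} (hπ : Bnd π b) (k : ℕ) :
    Bnd (π ^ k) (k * b) := by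
  induction k with
  | zero => intro w; simp
  | succ k ih =>
    have : π ^ (k+1) = π ^ k * π := pow_succ π k
    rw [this]
    have h2 := bnd_mul ih hπ
    intro w
    calc ((π ^ k * π) w).1.length ≤ w.1.length + (1 * (k * b)) + b := by
          have := h2 w; omega
      _ ≤ w.1.length + (k+1) * b := by nlinarith

theorem bnd_one : Bnd (1 : Equiv.Perm (W α β)) 0 := fun w => le_of_eq rfl

/-- the subgroup of permutations that change lengths by a bounded amount -/
def bddSubgroup : Subgroup (Equiv.Perm (W α β)) where
  carrier := {π | ∃ b : ℕ, ∀ w : W α β, (π w).1.length ≤ w.1.length + b ∧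
      w.1.length ≤ (π w).1.length + b}
  one_mem' := ⟨0, fun w => by simp⟩
  mul_mem' := by
    rintro π ρ ⟨b, hb⟩ ⟨c, hc⟩
    refine ⟨b + c, fun w => ?_⟩
    have h1 := hb (ρ w)
    have h2 := hc w
    have : ((π * ρ) w) = π (ρ w) := rfl
    rw [this]
    omega
  inv_mem' := by
    rintro π ⟨b, hb⟩
    refine ⟨b, fun w => ?_⟩
    have h1 := hb (π⁻¹ w)
    have : π (π⁻¹ w) = w := by simp
    rw [this] at h1
    omega

theorem permA_mem_bdd (k : α) : (permA k : Equiv.Perm (W α β)) ∈ bddSubgroup := by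
  refine ⟨1, fun w => ⟨bnd_permA k w, ?_⟩⟩
  have h := bnd_permA (-k) ((permA k : Equiv.Perm (W α β)) w)
  have : (permA (-k) : Equiv.Perm (W α β)) ((permA k) w) = w := by
    have := permA_mul (-k) k (α := α) (β := β)
    rw [neg_add_cancel, permA_zero] at this
    calc (permA (-k) : Equiv.Perm (W α β)) ((permA k) w)
        = ((permA (-k) * permA k : Equiv.Perm (W α β))) w := rfl
      _ = w := by rw [this]; rfl
  rwa [this] at h

theorem permB_mem_bdd (k : β) : (permB k : Equiv.Perm (W α β)) ∈ bddSubgroup := by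
  refine ⟨1, fun w => ⟨bnd_permB k w, ?_⟩⟩
  have h := bnd_permB (-k) ((permB k : Equiv.Perm (W α β)) w)
  have : (permB (-k) : Equiv.Perm (W α β)) ((permB k) w) = w := by
    have := permB_mul (-k) k (α := α) (β := β)
    rw [neg_add_cancel, permB_zero] at this
    calc (permB (-k) : Equiv.Perm (W α β)) ((permB k) w)
        = ((permB (-k) * permB k : Equiv.Perm (W α β))) w := rfl
      _ = w := by rw [this]; rfl
  rwa [this] at h

/-- the key upper bound : `CP n` increases lengths by at most `2 qn n + 2`. -/
theorem bnd_CP {sa e : α} {rb : β} {qn : ℕ} (hqn : 1 ≤ qn) (n : ℕ) :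
    Bnd (CP sa e rb qn n) (2*qn*n + 2) := by
  cases n with
  | zero =>
    have : CP sa e rb qn 0 = permB rb * (1 : Equiv.Perm (W α β)) * permA sa := by
      rw [CP, pow_zero]
    rw [this, mul_one]
    have := bnd_mul (bnd_permB rb) (bnd_permA sa)
    simpa using this
  | succ j =>
    -- CP (j+1) = permB rb * (X^qn * (Y X^qn)^j * Y) * permA sa
    -- with Y * permA sa = permA (e + sa) and Y * X^qn = permA (e+sa) * permB rb * X^(qn-1)
    obtain ⟨t, rfl⟩ : ∃ t, qn = t + 1 := ⟨qn - 1, by omega⟩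
    have shift : ∀ j : ℕ, (XP sa rb ^ (t+1) * permA e) ^ (j+1) =
        XP sa rb ^ (t+1) * (permA e * XP sa rb ^ (t+1)) ^ j * permA e := by
      intro j
      induction j with
      | zero => simp [pow_one]
      | succ j ih =>
        rw [pow_succ (XP sa rb ^ (t+1) * permA e) (j+1), ih,
          pow_succ (permA e * XP sa rb ^ (t+1)) j]
        simp only [mul_assoc]
    have hYX : permA e * XP sa rb ^ (t+1) =
        (permA (e + sa) * permB rb) * XP sa rb ^ t := by
      rw [pow_succ']
      rw [XP, ← mul_assoc, ← mul_assoc, permA_mul]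
    have decomp : CP sa e rb (t+1) (j+1) =
        permB rb * (XP sa rb ^ (t+1) *
          ((permA (e + sa) * permB rb) * XP sa rb ^ t) ^ j * permA (e + sa)) := by
      rw [CP, FP, shift j, ← hYX]
      have : (permA e * permA sa : Equiv.Perm (W α β)) = permA (e + sa) := permA_mul e sa
      rw [← this]
      group
    have bmono : ∀ (π : Equiv.Perm (W α β)) (b c : ℕ), Bnd π b → b ≤ c → Bnd π c := by
      intro π b c hb hbc w
      have := hb w
      omega
    have bX : Bnd (XP sa rb) 2 := by
      have := bnd_mul (bnd_permA sa) (bnd_permB rb)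
      simpa [XP] using this
    have bX1 : Bnd (XP sa rb ^ (t+1)) ((t+1) * 2) := bnd_pow bX (t+1)
    have bYX : Bnd ((permA (e + sa) * permB rb) * XP sa rb ^ t) (t * 2 + (1 + 1)) :=
      bnd_mul (bnd_mul (bnd_permA _) (bnd_permB _)) (bnd_pow bX t)
    have bYXj : Bnd (((permA (e + sa) * permB rb) * XP sa rb ^ t) ^ j) (j * (t*2 + (1+1))) :=
      bnd_pow bYX j
    have btot := bnd_mul (bnd_permB rb) (bnd_mul (bnd_mul bX1 bYXj) (bnd_permA (e + sa)))
    rw [decomp]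
    refine bmono _ _ _ btot ?_
    nlinarith
end Bounds
end TKN

/-- The single relator `u^p * v^{-q}` of the `(p,q)`-torus knot group, in the free
group on two generators (`FreeGroup.of 0 = u`, `FreeGroup.of 1 = v`). -/
def torusRels (p q : ℤ) : Set (FreeGroup (Fin 2)) :=
  {FreeGroup.of 0 ^ p * FreeGroup.of 1 ^ (-q)}

/-- The `(p,q)`-torus knot group `⟨u, v ∣ u^p = v^q⟩`. -/
abbrev TorusKnotGroup (p q : ℤ) := PresentedGroup (torusRels p q)

/-- The generator `u`. -/
def u (p q : ℤ) : TorusKnotGroup p q := PresentedGroup.of 0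

/-- The generator `v`. -/
def v (p q : ℤ) : TorusKnotGroup p q := PresentedGroup.of 1

/-- The element `x = u^s * v^r`. -/
def xelt (p q r s : ℤ) : TorusKnotGroup p q := u p q ^ s * v p q ^ r

/-- The element `a = u * x^{-q}`. -/
def aelt (p q r s : ℤ) : TorusKnotGroup p q := u p q * xelt p q r s ^ (-q)

/-- The element `μ_n = x * a^{-n}`. -/
def μ (p q r s n : ℤ) : TorusKnotGroup p q := xelt p q r s * aelt p q r s ^ (-n)

namespace TKN

section Torus

variable {p q r s : ℤ}

/-- the relation `u^p * v^{-q} = 1` holds in the torus knot group -/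
theorem torus_rel : u p q ^ (p : ℤ) * v p q ^ (-q : ℤ) = 1 := by
  have hmem : (FreeGroup.of 0 ^ p * FreeGroup.of 1 ^ (-q) : FreeGroup (Fin 2)) ∈
      Subgroup.normalClosure (torusRels p q) :=
    Subgroup.subset_normalClosure (by simp [torusRels])
  have h : (PresentedGroup.mk (torusRels p q)) (FreeGroup.of 0 ^ p * FreeGroup.of 1 ^ (-q)) = 1 :=
    (QuotientGroup.eq_one_iff _).2 hmem
  rw [map_mul, map_zpow, map_zpow] at h
  exact h

theorem torus_rel' : u p q ^ (p : ℤ) = v p q ^ (q : ℤ) := by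
  have h := torus_rel (p := p) (q := q)
  rw [zpow_neg] at h
  calc u p q ^ (p:ℤ) = u p q ^ (p:ℤ) * (v p q ^ (q:ℤ))⁻¹ * v p q ^ (q:ℤ) := by group
    _ = v p q ^ (q:ℤ) := by rw [h, one_mul]

/-- part (i) : every `μ_n` normally generates the torus knot group. -/
theorem normal_closure_mu_eq_top (hq : 2 ≤ q) (hrs : r * p + s * q = 1) (n : ℤ) :
    Subgroup.normalClosure ({μ p q r s n} : Set (TorusKnotGroup p q)) = ⊤ := by
  set N := Subgroup.normalClosure ({μ p q r s n} : Set (TorusKnotGroup p q)) with hN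
  haveI hNnormal : N.Normal := Subgroup.normalClosure_normal
  set π := QuotientGroup.mk' N with hπ
  have hμ : π (μ p q r s n) = 1 :=
    (QuotientGroup.eq_one_iff _).2 (Subgroup.subset_normalClosure (by simp [hN]))
  obtain ⟨t, ht⟩ : ∃ t, π (aelt p q r s) = t := ⟨_, rfl⟩
  have hμ2 : π (xelt p q r s) * t ^ (-n) = 1 := by
    rw [μ, map_mul, map_zpow, ht] at hμ
    exact hμ
  have h1 : π (xelt p q r s) = t ^ n := by
    calc π (xelt p q r s) = π (xelt p q r s) * t ^ (-n) * t ^ n := by group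
      _ = t ^ n := by rw [hμ2, one_mul]
  have ha : t = π (u p q) * (t ^ n) ^ (-q:ℤ) := by
    have ha0 : π (aelt p q r s) = π (u p q) * (π (xelt p q r s)) ^ (-q:ℤ) := by
      rw [aelt, map_mul, map_zpow]
    rw [ht, h1] at ha0
    exact ha0
  have h2 : π (u p q) = t ^ (n * q + 1) := by
    calc π (u p q) = (π (u p q) * (t ^ n) ^ (-q:ℤ)) * ((t ^ n) ^ (q:ℤ)) := by group
      _ = t * (t ^ n) ^ (q:ℤ) := by rw [← ha]
      _ = t ^ (n * q + 1) := by group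
  have h3 : π (v p q) ^ (r : ℤ) = t ^ (n - s * (n * q + 1)) := by
    have hx : π (xelt p q r s) = π (u p q) ^ (s:ℤ) * π (v p q) ^ (r:ℤ) := by
      rw [xelt, map_mul, map_zpow, map_zpow]
    rw [h1, h2] at hx
    calc π (v p q) ^ (r:ℤ)
        = ((t ^ (n*q+1)) ^ (s:ℤ))⁻¹ * ((t ^ (n*q+1)) ^ (s:ℤ) * π (v p q) ^ (r:ℤ)) := by group
      _ = ((t ^ (n*q+1)) ^ (s:ℤ))⁻¹ * t ^ n := by rw [← hx]
      _ = t ^ (n - s * (n * q + 1)) := by group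
  have h4 : π (v p q) ^ (q : ℤ) = t ^ (p * (n * q + 1)) := by
    have hrel : π (u p q ^ (p:ℤ)) = π (v p q ^ (q:ℤ)) := by
      rw [torus_rel']
    rw [map_zpow, map_zpow, h2] at hrel
    rw [← hrel]
    group
  obtain ⟨c, d, hcd⟩ : IsCoprime r q := ⟨p, s, by linarith⟩
  have h6 : π (v p q) = t ^ (c * (n - s * (n*q+1)) + d * (p * (n*q+1))) := by
    calc π (v p q) = (π (v p q) ^ (r:ℤ)) ^ c * (π (v p q) ^ (q:ℤ)) ^ d := by
          rw [← zpow_mul, ← zpow_mul, ← zpow_add, show r * c + q * d = 1 by linarith, zpow_one]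
      _ = (t ^ (n - s * (n * q + 1))) ^ c * (t ^ (p * (n*q+1))) ^ d := by rw [h3, h4]
      _ = t ^ (c * (n - s * (n*q+1)) + d * (p * (n*q+1))) := by group
  have h7 : t ^ d = 1 := by
    have hh : t ^ ((c * (n - s * (n*q+1)) + d * (p * (n*q+1))) * r - (n - s * (n * q + 1)))
        = 1 := by
      rw [zpow_sub, zpow_mul, ← h6, h3]
      group
    rw [show (c * (n - s * (n*q+1)) + d * (p * (n*q+1))) * r - (n - s * (n * q + 1)) = d by
      linear_combination (n - s * (n*q+1)) * hcd + (d * (n*q+1)) * hrs] at hh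
    exact hh
  have h8 : t ^ c = 1 := by
    have hh : t ^ (p * (n*q+1) - (c * (n - s * (n*q+1)) + d * (p * (n*q+1))) * q) = 1 := by
      rw [zpow_sub, zpow_mul t (c * (n - s * (n*q+1)) + d * (p * (n*q+1))) q, ← h6, h4]
      group
    rw [show p * (n*q+1) - (c * (n - s * (n*q+1)) + d * (p * (n*q+1))) * q = c by
      linear_combination (c * (n*q+1)) * hrs - (p * (n*q+1)) * hcd] at hh
    exact hh
  obtain ⟨e, f, hef⟩ : IsCoprime c d := ⟨r, q, by linarith⟩
  have h10 : t = 1 := by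
    calc t = t ^ (c * e + d * f) := by
          rw [show c * e + d * f = 1 by linarith, zpow_one]
      _ = (t ^ c) ^ e * (t ^ d) ^ f := by group
      _ = 1 := by rw [h7, h8]; simp
  have hu1 : π (u p q) = 1 := by rw [h2, h10]; simp
  have hv1 : π (v p q) = 1 := by rw [h6, h10]; simp
  rw [eq_top_iff]
  intro g _
  refine PresentedGroup.generated_by (torusRels p q) N ?_ g
  intro j
  have : π (PresentedGroup.of j) = 1 → PresentedGroup.of j ∈ N := by
    intro h
    exact (QuotientGroup.eq_one_iff _).1 h
  apply this
  fin_cases j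
  · exact hu1
  · exact hv1

end Torus

section Conj

variable {p q r s : ℤ}

/-- the conjugate `v^r (x^q u⁻¹)^n u^s` of `μ_n` -/
def cbar (p q r s : ℤ) (n : ℕ) : TorusKnotGroup p q :=
  v p q ^ (r:ℤ) * ((u p q ^ (s:ℤ) * v p q ^ (r:ℤ)) ^ (q:ℤ) * (u p q)⁻¹) ^ (n:ℤ) *
    u p q ^ (s:ℤ)

theorem cbar_conj (n : ℕ) :
    (u p q ^ (s:ℤ))⁻¹ * μ p q r s (n:ℤ) * u p q ^ (s:ℤ) = cbar p q r s n := by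
  have hainv : (aelt p q r s)⁻¹ = xelt p q r s ^ (q:ℤ) * (u p q)⁻¹ := by
    rw [aelt]; group
  have hpow : aelt p q r s ^ (-(n:ℤ)) = (xelt p q r s ^ (q:ℤ) * (u p q)⁻¹) ^ (n:ℤ) := by
    rw [← hainv, zpow_neg, inv_zpow]
  rw [μ, hpow, cbar, xelt]
  set T := (xelt p q r s ^ (q:ℤ) * (u p q)⁻¹) ^ (n:ℤ) with hT
  rw [xelt] at hT
  rw [← hT]
  group

end Conj
section Perm2

variable {p q r s : ℤ}

theorem conj_pow_eq {G : Type*} [Group G] (a b : G) (k : ℕ) :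
    (a * b * a⁻¹) ^ k = a * b ^ k * a⁻¹ := by
  induction k with
  | zero => group
  | succ k ih => rw [pow_succ, ih, pow_succ]; group

theorem not_isConj (hpq : q < p) (hq : 2 ≤ q) (hrs : r * p + s * q = 1)
    (hr : |r| < q) (hs1 : 1 < s) (hs2 : s < p) {m n : ℕ}
    (hconj : IsConj (μ p q r s (m:ℤ)) (μ p q r s (n:ℤ))) : n ≤ m := by
  have hp3 : (3:ℤ) ≤ p := by omega
  haveI hP : NeZero p.toNat := ⟨by omega⟩
  haveI hQ : NeZero q.toNat := ⟨by omega⟩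
  have hPz : (p.toNat : ℤ) = p := Int.toNat_of_nonneg (by omega)
  have hQz : (q.toNat : ℤ) = q := Int.toNat_of_nonneg (by omega)
  -- the permutation representation
  have hrel : ∀ rr ∈ torusRels p q,
      FreeGroup.lift (![permA 1, permB 1] :
        Fin 2 → Equiv.Perm (W (ZMod p.toNat) (ZMod q.toNat))) rr = 1 := by
    intro rr hrr
    rw [torusRels, Set.mem_singleton_iff] at hrr
    subst hrr
    rw [map_mul, map_zpow, map_zpow, FreeGroup.lift_apply_of, FreeGroup.lift_apply_of]
    have hf0 : (![permA 1, permB 1] :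
        Fin 2 → Equiv.Perm (W (ZMod p.toNat) (ZMod q.toNat))) 0 = permA 1 := rfl
    have hf1 : (![permA 1, permB 1] :
        Fin 2 → Equiv.Perm (W (ZMod p.toNat) (ZMod q.toNat))) 1 = permB 1 := rfl
    rw [hf0, hf1, permA_zpow, permB_zpow, zsmul_one, zsmul_one]
    have e1 : ((p : ZMod p.toNat) : ZMod p.toNat) = 0 := by
      rw [ZMod.intCast_zmod_eq_zero_iff_dvd, hPz]
    have e2 : ((-q : ℤ) : ZMod q.toNat) = 0 := by
      rw [ZMod.intCast_zmod_eq_zero_iff_dvd, hQz]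
      exact dvd_neg.2 dvd_rfl
    rw [e1, e2, permA_zero, permB_zero, one_mul]
  set φ := PresentedGroup.toGroup hrel with hφ
  have hφu : φ (u p q) = permA 1 := PresentedGroup.toGroup.of hrel
  have hφv : φ (v p q) = permB 1 := PresentedGroup.toGroup.of hrel
  have hφus : ∀ z : ℤ, φ (u p q ^ z) = permA ((z : ZMod p.toNat)) := by
    intro z
    rw [map_zpow, hφu, permA_zpow, zsmul_one]
  have hφvs : ∀ z : ℤ, φ (v p q ^ z) = permB ((z : ZMod q.toNat)) := by
    intro z
    rw [map_zpow, hφv, permB_zpow, zsmul_one]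
  -- nonvanishing of the letters
  have hsbar : ((s : ZMod p.toNat)) ≠ 0 := by
    intro h
    rw [ZMod.intCast_zmod_eq_zero_iff_dvd, hPz] at h
    have := Int.le_of_dvd (by omega) h
    omega
  have hrz : r ≠ 0 := by
    intro h
    rw [h] at hrs
    nlinarith
  have hrbar : ((r : ZMod q.toNat)) ≠ 0 := by
    intro h
    rw [ZMod.intCast_zmod_eq_zero_iff_dvd, hQz] at h
    have h2 : q ∣ |r| := (dvd_abs q r).2 h
    have := Int.le_of_dvd (abs_pos.2 hrz) h2
    omega
  have hesa : (-1 : ZMod p.toNat) + (s : ZMod p.toNat) ≠ 0 := by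
    have heq : (-1 : ZMod p.toNat) + (s : ZMod p.toNat) = ((s - 1 : ℤ) : ZMod p.toNat) := by
      push_cast
      ring
    rw [heq]
    intro h
    rw [ZMod.intCast_zmod_eq_zero_iff_dvd, hPz] at h
    have := Int.le_of_dvd (by omega) h
    omega
  have hqn : 1 ≤ q.toNat := by omega
  -- φ of the conjugated μ's
  have hφc : ∀ k : ℕ, φ (cbar p q r s k) = CP (s : ZMod p.toNat) (-1) (r : ZMod q.toNat)
      q.toNat k := by
    intro k
    have hT : φ ((u p q ^ (s:ℤ) * v p q ^ (r:ℤ)) ^ (q:ℤ) * (u p q)⁻¹) =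
        XP ((s : ZMod p.toNat)) ((r : ZMod q.toNat)) ^ q.toNat * permA (-1) := by
      have hzp : (permA ((s : ZMod p.toNat)) * permB ((r : ZMod q.toNat)) :
          Equiv.Perm (W (ZMod p.toNat) (ZMod q.toNat))) ^ (q:ℤ) =
          (permA ((s : ZMod p.toNat)) * permB ((r : ZMod q.toNat))) ^ q.toNat := by
        have h0 := zpow_natCast (permA ((s : ZMod p.toNat)) * permB ((r : ZMod q.toNat)) :
          Equiv.Perm (W (ZMod p.toNat) (ZMod q.toNat))) q.toNat
        rwa [hQz] at h0
      rw [map_mul, map_zpow, map_mul, hφus, hφvs, map_inv, hφu, permA_inv, hzp, XP]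
    rw [cbar, map_mul, map_mul,
      map_zpow φ ((u p q ^ (s:ℤ) * v p q ^ (r:ℤ)) ^ (q:ℤ) * (u p q)⁻¹) ((k:ℕ):ℤ),
      hT, hφvs, hφus, zpow_natCast, CP, FP]
  -- the conjugating element
  obtain ⟨c, hc⟩ := isConj_iff.1 hconj
  have hcbarconj : ((u p q ^ (s:ℤ))⁻¹ * c * u p q ^ (s:ℤ)) * cbar p q r s m *
      ((u p q ^ (s:ℤ))⁻¹ * c * u p q ^ (s:ℤ))⁻¹ = cbar p q r s n := by
    rw [← cbar_conj, ← cbar_conj, ← hc]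
    group
  set d := (u p q ^ (s:ℤ))⁻¹ * c * u p q ^ (s:ℤ) with hd
  -- φ d has bounded displacement
  have hmem : φ d ∈ (bddSubgroup : Subgroup (Equiv.Perm (W (ZMod p.toNat) (ZMod q.toNat)))) := by
    have := PresentedGroup.generated_by (torusRels p q)
      ((bddSubgroup : Subgroup (Equiv.Perm (W (ZMod p.toNat) (ZMod q.toNat)))).comap φ) ?_ d
    · exact this
    · intro j
      rw [Subgroup.mem_comap]
      fin_cases j
      · show φ (u p q) ∈ _
        rw [hφu]
        exact permA_mem_bdd 1
      · show φ (v p q) ∈ _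
        rw [hφv]
        exact permB_mem_bdd 1
  obtain ⟨b, hb⟩ := hmem
  -- powers of the cyclic words
  have hperm : ∀ k : ℕ, (CP (s : ZMod p.toNat) (-1) ((r : ZMod q.toNat)) q.toNat n) ^ k =
      φ d * (CP (s : ZMod p.toNat) (-1) ((r : ZMod q.toNat)) q.toNat m) ^ k * (φ d)⁻¹ := by
    intro k
    rw [← hφc, ← hφc, ← conj_pow_eq, ← map_inv, ← map_mul, ← map_mul, hcbarconj]
  by_contra hcon
  push_neg at hcon
  set k := 2 * b + 1 with hk
  have e0 : ((CP (s : ZMod p.toNat) (-1) ((r : ZMod q.toNat)) q.toNat n ^ k) wnil).1.length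
      = k * (2 * q.toNat * n + 2) := (Cpow q.toNat hsbar hrbar hesa hqn n k).1
  set w1 := ((φ d)⁻¹ : Equiv.Perm (W (ZMod p.toNat) (ZMod q.toNat))) wnil with hw1def
  have hw1 : w1.1.length ≤ b := by
    have h2 := (hb w1).2
    have h3 : (φ d) w1 = wnil := by
      rw [hw1def]
      exact Equiv.apply_symm_apply _ _
    rw [h3] at h2
    simpa [wnil] using h2
  set w2 := ((CP (s : ZMod p.toNat) (-1) ((r : ZMod q.toNat)) q.toNat m) ^ k) w1 with hw2def
  have hw2 : w2.1.length ≤ w1.1.length + k * (2 * q.toNat * m + 2) :=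
    bnd_pow (bnd_CP hqn m) k w1
  have hw3 : ((φ d) w2).1.length ≤ w2.1.length + b := (hb w2).1
  have emain : ((CP (s : ZMod p.toNat) (-1) ((r : ZMod q.toNat)) q.toNat n) ^ k) wnil
      = (φ d) w2 := by
    rw [hperm k, hw2def, hw1def]
    rfl
  rw [emain] at e0
  have hfin : k * (2 * q.toNat * n + 2) ≤ b + k * (2 * q.toNat * m + 2) + b := by
    omega
  have hnm : m + 1 ≤ n := hcon
  have key1 : k * (2*q.toNat*(m+1)+2) ≤ k * (2*q.toNat*n+2) := by
    apply Nat.mul_le_mul_left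
    have : 2*q.toNat*(m+1) ≤ 2*q.toNat*n := Nat.mul_le_mul_left _ hnm
    omega
  have key2 : k*(2*q.toNat) ≤ 2*b := by nlinarith [hfin, key1]
  have key3 : 2*(2*b+1) ≤ k*(2*q.toNat) := by
    have hk2 : k = 2*b+1 := rfl
    nlinarith [hqn]
  omega

end Perm2
end TKN

theorem torus_mu_killers_nonconjugate (p q r s : ℤ) (hcop : IsCoprime p q)
    (hpq : q < p) (hq : 2 ≤ q) (hrs : r * p + s * q = 1)
    (hr : |r| < q) (hs1 : 1 < s) (hs2 : s < p) :
    (∀ n : ℕ, Subgroup.normalClosure ({μ p q r s n} : Set (TorusKnotGroup p q)) = ⊤) ∧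
      ∀ m n : ℕ, m ≠ n → ¬ IsConj (μ p q r s m) (μ p q r s n) := by
  constructor
  · intro n
    exact TKN.normal_closure_mu_eq_top hq hrs n
  · intro m n hmn hconj
    have h1 := TKN.not_isConj hpq hq hrs hr hs1 hs2 hconj
    have h2 := TKN.not_isConj hpq hq hrs hr hs1 hs2 hconj.symm
    omega
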